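/- Let G be a finite connected graph with center C_G satisfying the uniform eccentricity property: d_G(C_G, v) = ecc_G(v) − rad(G) for all v ∈ G. Let φ : G → H be a surjective map satisfying (1/A)·d_G(x,y) − B ≤ d_H(φ(x),φ(y)) ≤ A·d_G(x,y) + B for all x,y. Then the center-shift d_G(C_G, φ⁻¹(C_H)) is at most (A − 1/A)·rad(H) + A·B + B/A. -/

import Mathlib

open SimpleGraph

/-- The eccentricity of a vertex: the maximum distance to any vertex. -/
noncomputable def ecc {V : Type*} [Fintype V] (G : SimpleGraph V) (v : V) : ℕ :=
  Finset.univ.sup (fun u => G.dist v u)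

/-- The radius: the minimum eccentricity. -/
noncomputable def grad {V : Type*} [Fintype V] (G : SimpleGraph V) : ℕ :=
  sInf {n : ℕ | ∃ v : V, ecc G v = n}

/-- The center: the set of vertices of minimum eccentricity. -/
noncomputable def center {V : Type*} [Fintype V] (G : SimpleGraph V) : Set V :=
  {v : V | ecc G v = grad G}

/-- The center-shift of a surjective map `φ : G → H`: the minimum `G`-distance
between a center vertex of `G` and a preimage of a center vertex of `H`. -/
noncomputable def centerShift {V W : Type*} [Fintype V] [Fintype W]
    (G : SimpleGraph V) (H : SimpleGraph W) (φ : V → W) : ℕ :=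
  sInf {n : ℕ | ∃ u v : V, u ∈ _root_.center G ∧ φ v ∈ _root_.center H ∧ G.dist u v = n}

/-- If `G` satisfies the uniform eccentricity property and `φ : G → H` is a
surjective `(A,B,C)`-quasi-isometry, then the center-shift is at most
`(A - 1/A)·rad(H) + A·B + B/A`. -/
theorem centerShift_le_two_sided {V W : Type*} [Fintype V] [Fintype W]
    (G : SimpleGraph V) (H : SimpleGraph W)
    (hG : G.Connected) (hH : H.Connected)
    (huniecc : ∀ v : V, sInf {n : ℕ | ∃ c ∈ _root_.center G, G.dist c v = n} =
      ecc G v - grad G)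
    (A B : ℝ) (hA : 1 ≤ A) (hB : 0 ≤ B)
    (φ : V → W) (hsurj : Function.Surjective φ)
    (hQ1 : ∀ x y : V, (1 / A) * G.dist x y - B ≤ (H.dist (φ x) (φ y) : ℝ) ∧
        (H.dist (φ x) (φ y) : ℝ) ≤ A * G.dist x y + B) :
    (centerShift G H φ : ℝ) ≤ (A - 1 / A) * grad H + A * B + B / A := by
  have hA0 : (0:ℝ) < A := lt_of_lt_of_le one_pos hA
  haveI : Nonempty V := hG.nonempty
  haveI : Nonempty W := hH.nonempty
  -- a center vertex of H and a preimage
  obtain ⟨w, hw⟩ : ∃ w, w ∈ _root_.center H := by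
    obtain ⟨u, hu⟩ := Nat.sInf_mem (⟨ecc H Classical.ofNonempty, Classical.ofNonempty, rfl⟩ :
      {n : ℕ | ∃ v : W, ecc H v = n}.Nonempty)
    exact ⟨u, hu⟩
  obtain ⟨v, hv⟩ := hsurj w
  -- a center vertex of G
  obtain ⟨c0, hc0⟩ : ∃ c, c ∈ _root_.center G := by
    obtain ⟨u, hu⟩ := Nat.sInf_mem (⟨ecc G Classical.ofNonempty, Classical.ofNonempty, rfl⟩ :
      {n : ℕ | ∃ v : V, ecc G v = n}.Nonempty)
    exact ⟨u, hu⟩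
  have hgle : grad G ≤ ecc G v := Nat.sInf_le ⟨v, rfl⟩
  -- centerShift ≤ ecc G v - grad G
  have hS : {n : ℕ | ∃ c ∈ _root_.center G, G.dist c v = n}.Nonempty := ⟨G.dist c0 v, c0, hc0, rfl⟩
  obtain ⟨c, hc, hcd⟩ := Nat.sInf_mem hS
  rw [huniecc v] at hcd
  have hcs : centerShift G H φ ≤ ecc G v - grad G :=
    Nat.sInf_le ⟨c, v, hc, hv ▸ hw, hcd⟩
  have hcsR : (centerShift G H φ : ℝ) ≤ (ecc G v : ℝ) - (grad G : ℝ) := by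
    have : ((centerShift G H φ : ℕ) : ℝ) ≤ ((ecc G v - grad G : ℕ) : ℝ) := Nat.cast_le.mpr hcs
    rwa [Nat.cast_sub hgle] at this
  -- upper bound on ecc G v
  have heccv : (ecc G v : ℝ) ≤ A * (grad H) + A * B := by
    obtain ⟨x, -, hx⟩ := Finset.exists_mem_eq_sup Finset.univ Finset.univ_nonempty
      (fun u => G.dist v u)
    have hdH : (H.dist (φ v) (φ x) : ℝ) ≤ (grad H : ℝ) := by
      have h1 : H.dist w (φ x) ≤ ecc H w := Finset.le_sup (Finset.mem_univ _)
      rw [hv]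
      exact_mod_cast hw ▸ h1
    have := (hQ1 v x).1
    have hev : (ecc G v : ℝ) = (G.dist v x : ℝ) := by exact_mod_cast congrArg Nat.cast hx
    rw [hev]
    have h2 : (1 / A) * (G.dist v x : ℝ) - B ≤ (grad H : ℝ) := le_trans this hdH
    rw [div_mul_eq_mul_div, one_mul, sub_le_iff_le_add, div_le_iff₀ hA0] at h2
    nlinarith
  -- lower bound on grad G
  have hgradG : (grad H : ℝ) ≤ A * (grad G) + B := by
    have hge : grad H ≤ ecc H (φ c0) := Nat.sInf_le ⟨φ c0, rfl⟩
    obtain ⟨x', -, hx'⟩ := Finset.exists_mem_eq_sup Finset.univ Finset.univ_nonempty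
      (fun u => H.dist (φ c0) u)
    obtain ⟨y, hy⟩ := hsurj x'
    have h1 : (grad H : ℝ) ≤ (H.dist (φ c0) (φ y) : ℝ) := by
      rw [hy]
      exact_mod_cast le_trans hge (le_of_eq hx')
    have h2 := (hQ1 c0 y).2
    have h3 : (G.dist c0 y : ℝ) ≤ (grad G : ℝ) := by
      have : G.dist c0 y ≤ ecc G c0 := Finset.le_sup (Finset.mem_univ _)
      exact_mod_cast hc0 ▸ this
    nlinarith
  have hkey : (A * (grad H : ℝ) + A * B) - ((grad H : ℝ) - B)/A =
      (A - 1 / A) * grad H + A * B + B / A := by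
    field_simp
    ring
  have hdiv : ((grad H : ℝ) - B)/A ≤ (grad G : ℝ) := by
    rw [div_le_iff₀ hA0]
    nlinarith
  linarith
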